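/- arXiv:2604.09513 — 2 statements merged into one kernel-verified Lean document; each statement's English description precedes it below -/
import Mathlib

section
/- Let μ be a probability measure on a complete Riemannian manifold M of non-positive sectional curvature with Fréchet mean ȳ (a minimizer of y ↦ ∫ d(z,y)² dμ(z)). Then for every y ∈ M, ∫ d(z,y)² dμ(z) ≥ d(ȳ, y)² + ∫ d(z, ȳ)² dμ(z). -/
open MeasureTheory Filter Topology

/-- NPC (Sturm) variance inequality: on a metric space satisfying the semiparallelogram
law (non-positive curvature), if `ybar` is a Fréchet mean of the probability measure `μ`,
then `∫ d(z,y)² dμ(z) ≥ d(ybar,y)² + ∫ d(z,ybar)² dμ(z)` for every `y`. -/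
theorem stmt_4 {M : Type*} [MetricSpace M] [MeasurableSpace M] [BorelSpace M]
    (npc : ∀ x y : M, ∃ mid : M, ∀ z : M,
      dist z mid ^ 2 ≤ (dist z x ^ 2 + dist z y ^ 2) / 2 - dist x y ^ 2 / 4)
    (μ : Measure M) [IsProbabilityMeasure μ]
    (hint : ∀ y : M, Integrable (fun z => dist z y ^ 2) μ)
    (ybar : M)
    (hmin : ∀ y : M, ∫ z, dist z ybar ^ 2 ∂μ ≤ ∫ z, dist z y ^ 2 ∂μ) :
    ∀ y : M, dist ybar y ^ 2 + ∫ z, dist z ybar ^ 2 ∂μ ≤ ∫ z, dist z y ^ 2 ∂μ := by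
  intro y
  set F : M → ℝ := fun p => ∫ z, dist z p ^ 2 ∂μ with hF
  -- key step: for each p there is a midpoint m of ybar and p with
  -- F m ≤ (F ybar + F p)/2 - d(ybar,p)²/4
  have key : ∀ p : M, ∃ m : M, dist ybar m = dist ybar p / 2 ∧
      F m ≤ (F ybar + F p) / 2 - dist ybar p ^ 2 / 4 := by
    intro p
    obtain ⟨m, hm⟩ := npc ybar p
    have h1 := hm ybar
    have h2 := hm p
    simp only [dist_self] at h1 h2
    rw [dist_comm p ybar] at h2
    have hm2 : dist p m ≤ dist ybar p / 2 := by
      have hsq : dist p m ^ 2 ≤ (dist ybar p / 2) ^ 2 := by nlinarith [h2]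
      exact (pow_le_pow_iff_left₀ dist_nonneg (by positivity) two_ne_zero).mp hsq
    have hm1 : dist ybar m ≤ dist ybar p / 2 := by
      have hsq : dist ybar m ^ 2 ≤ (dist ybar p / 2) ^ 2 := by nlinarith [h1]
      exact (pow_le_pow_iff_left₀ dist_nonneg (by positivity) two_ne_zero).mp hsq
    have htri : dist ybar p ≤ dist ybar m + dist m p := dist_triangle _ _ _
    rw [dist_comm m p] at htri
    refine ⟨m, by linarith, ?_⟩
    have hmono : F m ≤ ∫ z, ((dist z ybar ^ 2 + dist z p ^ 2) / 2 - dist ybar p ^ 2 / 4) ∂μ := by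
      refine integral_mono (hint m) ?_ hm
      exact (((hint ybar).add (hint p)).div_const 2).sub (integrable_const _)
    refine hmono.trans_eq ?_
    have hI : Integrable (fun z => (dist z ybar ^ 2 + dist z p ^ 2) / 2) μ :=
      ((hint ybar).add (hint p)).div_const 2
    have hI2 : Integrable (fun z => dist z ybar ^ 2 + dist z p ^ 2) μ :=
      (hint ybar).add (hint p)
    rw [integral_sub hI (integrable_const _), integral_div, integral_add (hint ybar) (hint p),
        integral_const]
    simp [hF]
  -- iterate midpoints towards ybar
  choose mid hmid1 hmid2 using key
  set seq : ℕ → M := fun n => Nat.rec y (fun _ p => mid p) n with hseq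
  have hseq0 : seq 0 = y := rfl
  have hseqS : ∀ n, seq (n + 1) = mid (seq n) := fun n => rfl
  set d : ℝ := dist ybar y with hd
  have claim : ∀ n : ℕ, dist ybar (seq n) = d * (1/2)^n ∧
      (2:ℝ)^n * (F (seq n) - F ybar) + (1 - (1/2)^n) * d^2 ≤ F y - F ybar := by
    intro n
    induction n with
    | zero => simp [hseq0, hd]
    | succ n ih =>
      obtain ⟨hdn, hqn⟩ := ih
      constructor
      · rw [hseqS, hmid1, hdn, pow_succ]; ring
      · have hstep := hmid2 (seq n)
        rw [hdn] at hstep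
        set t : ℝ := (2:ℝ)^n with ht
        set r : ℝ := (1/2:ℝ)^n with hr
        have htr : t * r = 1 := by rw [ht, hr, ← mul_pow]; norm_num
        have htpos : (0:ℝ) < t := by positivity
        have hrpos : (0:ℝ) < r := by positivity
        rw [hseqS, pow_succ, pow_succ, ← ht, ← hr]
        have htr2 : t * r ^ 2 = r := by rw [pow_two, ← mul_assoc, htr, one_mul]
        nlinarith [mul_le_mul_of_nonneg_left hstep (le_of_lt (by linarith : (0:ℝ) < 2 * t)),
          hqn, sq_nonneg d, mul_pos htpos hrpos]
  -- pass to the limit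
  have hnn : ∀ n, (1 - (1/2:ℝ)^n) * d^2 ≤ F y - F ybar := by
    intro n
    obtain ⟨_, hq⟩ := claim n
    have hb : 0 ≤ F (seq n) - F ybar := sub_nonneg.2 (hmin (seq n))
    nlinarith [pow_pos (by norm_num : (0:ℝ) < 2) n, hq, hb]
  have hlim : Tendsto (fun n : ℕ => (1 - (1/2:ℝ)^n) * d^2) atTop (𝓝 ((1 - 0) * d^2)) :=
    (tendsto_const_nhds.sub (tendsto_pow_atTop_nhds_zero_of_lt_one (by norm_num)
      (by norm_num))).mul tendsto_const_nhds
  have := le_of_tendsto' hlim hnn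
  simp only [sub_zero, one_mul] at this
  linarith
end

section
/- The penalized regression problem min_F R_n(F) + λ ∫₀¹|F'|² over H^1([0,1], M) with R_n depending only on the values F(t₍₁₎),…,F(t₍ₙ₎), has the same optimal value as the finite-dimensional problem min over (f₁,…,fₙ) ∈ Mⁿ of R_n(f₁,…,fₙ) + λ Σᵢ d(fᵢ, fᵢ₊₁)²/Δᵢ. -/
open MeasureTheory Set


lemma myCS (v : ℝ → ℝ) (hv0 : ∀ u, 0 ≤ v u) (a b : ℝ) (hab : a < b)
    (hint : IntegrableOn (fun u => v u ^ 2) (Ioc a b)) :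
    (∫ x in Ioc a b, v x) ^ 2 ≤ (b - a) * ∫ x in Ioc a b, v x ^ 2 := by
  have hvm : AEStronglyMeasurable v (volume.restrict (Ioc a b)) := by
    have : (fun u => Real.sqrt (v u ^ 2)) = v := funext fun u => Real.sqrt_sq (hv0 u)
    rw [← this]
    exact Real.continuous_sqrt.comp_aestronglyMeasurable hint.1
  have hmem : MemLp v (ENNReal.ofReal 2) (volume.restrict (Ioc a b)) := by
    rw [show ENNReal.ofReal 2 = 2 by norm_num]
    exact (memLp_two_iff_integrable_sq hvm).mpr hint
  have hone : MemLp (fun _ : ℝ => (1:ℝ)) (ENNReal.ofReal 2) (volume.restrict (Ioc a b)) :=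
    memLp_const 1
  have hpq : Real.HolderConjugate 2 2 := Real.HolderConjugate.two_two
  have hCS := integral_mul_le_Lp_mul_Lq_of_nonneg hpq
    (Filter.Eventually.of_forall fun _ => zero_le_one)
    (Filter.Eventually.of_forall fun x => hv0 x) hone hmem
  simp only [one_mul] at hCS
  have h1 : ∫ (x : ℝ) in Ioc a b, (1:ℝ) ^ (2:ℝ) ∂volume = b - a := by
    simp [Real.volume_Ioc, ENNReal.toReal_ofReal (le_of_lt (sub_pos.mpr hab)), hab.le]
  have h2 : ∫ (x : ℝ) in Ioc a b, v x ^ (2:ℝ) ∂volume = ∫ x in Ioc a b, v x ^ 2 := by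
    apply integral_congr_ae
    exact Filter.Eventually.of_forall fun x => Real.rpow_two (v x)
  rw [h1, h2] at hCS
  have hI2 : 0 ≤ ∫ x in Ioc a b, v x ^ 2 :=
    setIntegral_nonneg measurableSet_Ioc fun x _ => sq_nonneg _
  have hba : 0 ≤ b - a := le_of_lt (sub_pos.mpr hab)
  calc (∫ x in Ioc a b, v x) ^ 2 ≤ ((b - a) ^ (1/2:ℝ) * (∫ x in Ioc a b, v x ^ 2) ^ (1/2:ℝ)) ^ 2 := by
        apply pow_le_pow_left₀ (setIntegral_nonneg measurableSet_Ioc fun x _ => hv0 x) hCS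
    _ = (b - a) * ∫ x in Ioc a b, v x ^ 2 := by
        rw [mul_pow, ← Real.rpow_natCast ((b-a)^(1/2:ℝ)) 2, ← Real.rpow_natCast ((∫ x in Ioc a b, v x ^ 2)^(1/2:ℝ)) 2,
          ← Real.rpow_mul hba, ← Real.rpow_mul hI2]
        norm_num

lemma myForward {M : Type*} [MetricSpace M] (n : ℕ)
    (t : Fin (n + 1) → ℝ) (hmono : StrictMono t) (h0 : 0 ≤ t 0) (h1 : t (Fin.last n) ≤ 1)
    (F : ℝ → M) (v : ℝ → ℝ) (hv0 : ∀ u, 0 ≤ v u)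
    (hlip : ∀ s u : ℝ, 0 ≤ s → s ≤ u → u ≤ 1 → dist (F s) (F u) ≤ ∫ x in Ioc s u, v x)
    (hint : IntegrableOn (fun u => (v u) ^ 2) (Ioc 0 1)) :
    ∑ i : Fin n, dist (F (t i.castSucc)) (F (t i.succ)) ^ 2 / (t i.succ - t i.castSucc)
      ≤ ∫ u in Ioc (0:ℝ) 1, (v u) ^ 2 := by
  have hsub : ∀ i : Fin n, Ioc (t i.castSucc) (t i.succ) ⊆ Ioc (0:ℝ) 1 := fun i =>
    Ioc_subset_Ioc (h0.trans (hmono.monotone (Fin.zero_le _)))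
      ((hmono.monotone (Fin.le_last _)).trans h1)
  have hlt : ∀ i : Fin n, t i.castSucc < t i.succ := fun i =>
    hmono (Fin.castSucc_lt_succ (i := i))
  have step : ∀ i : Fin n,
      dist (F (t i.castSucc)) (F (t i.succ)) ^ 2 / (t i.succ - t i.castSucc)
        ≤ ∫ u in Ioc (t i.castSucc) (t i.succ), (v u) ^ 2 := by
    intro i
    have hd := hlip (t i.castSucc) (t i.succ)
      (h0.trans (hmono.monotone (Fin.zero_le _))) (hlt i).le
      ((hmono.monotone (Fin.le_last _)).trans h1)
    have hnn : 0 ≤ ∫ x in Ioc (t i.castSucc) (t i.succ), v x :=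
      setIntegral_nonneg measurableSet_Ioc fun x _ => hv0 x
    have hsq : dist (F (t i.castSucc)) (F (t i.succ)) ^ 2
        ≤ (∫ x in Ioc (t i.castSucc) (t i.succ), v x) ^ 2 :=
      pow_le_pow_left₀ dist_nonneg hd 2
    have hcs := myCS v hv0 _ _ (hlt i) (hint.mono_set (hsub i))
    rw [div_le_iff₀ (sub_pos.mpr (hlt i))]
    calc dist (F (t i.castSucc)) (F (t i.succ)) ^ 2
        ≤ (t i.succ - t i.castSucc) * ∫ u in Ioc (t i.castSucc) (t i.succ), (v u) ^ 2 :=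
          hsq.trans hcs
      _ = (∫ u in Ioc (t i.castSucc) (t i.succ), (v u) ^ 2) * (t i.succ - t i.castSucc) :=
          mul_comm _ _
  calc ∑ i : Fin n, dist (F (t i.castSucc)) (F (t i.succ)) ^ 2 / (t i.succ - t i.castSucc)
      ≤ ∑ i : Fin n, ∫ u in Ioc (t i.castSucc) (t i.succ), (v u) ^ 2 :=
        Finset.sum_le_sum fun i _ => step i
    _ = ∫ u in ⋃ i : Fin n, Ioc (t i.castSucc) (t i.succ), (v u) ^ 2 := by
        rw [integral_iUnion_fintype (fun i => measurableSet_Ioc)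
          (fun i j hij => by
            rcases hij.lt_or_gt with h | h
            · exact Set.Ioc_disjoint_Ioc.mpr (by
                have : t i.succ ≤ t j.castSucc := hmono.monotone (by
                  simpa [Fin.succ_le_castSucc_iff] using h)
                simp [min_le_iff, le_max_iff]; tauto)
            · exact Set.Ioc_disjoint_Ioc.mpr (by
                have : t j.succ ≤ t i.castSucc := hmono.monotone (by
                  simpa [Fin.succ_le_castSucc_iff] using h)
                simp [min_le_iff, le_max_iff]; tauto))
          (fun i => hint.mono_set (hsub i))]
    _ ≤ ∫ u in Ioc (0:ℝ) 1, (v u) ^ 2 := by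
        apply setIntegral_mono_set hint
          (Filter.Eventually.of_forall fun x => sq_nonneg _)
        exact HasSubset.Subset.eventuallyLE (Set.iUnion_subset hsub)

section
variable {M : Type*} [MetricSpace M] {n : ℕ}
  (t : Fin (n + 1) → ℝ) (g : Fin (n + 1) → M)

lemma myConstruct (hmono : StrictMono t) (h0 : 0 ≤ t 0) (h1 : t (Fin.last n) ≤ 1)
    (hgeo : ∀ x y : M, ∃ γ : ℝ → M, γ 0 = x ∧ γ 1 = y ∧
      ∀ s u : ℝ, dist (γ s) (γ u) = |s - u| * dist x y) :
    ∃ (F : ℝ → M) (v : ℝ → ℝ), (∀ u, 0 ≤ v u) ∧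
      (∀ s u : ℝ, 0 ≤ s → s ≤ u → u ≤ 1 → dist (F s) (F u) ≤ ∫ x in Ioc s u, v x) ∧
      IntegrableOn (fun u => (v u) ^ 2) (Ioc 0 1) ∧ (∀ j, F (t j) = g j) ∧
      (∫ u in Ioc (0:ℝ) 1, (v u) ^ 2) = ∑ i : Fin n,
        dist (g i.castSucc) (g i.succ) ^ 2 / (t i.succ - t i.castSucc) := by
  classical
  obtain ⟨γ, hγ0, hγ1, hγd⟩ :
      ∃ γ : Fin n → ℝ → M, (∀ i, γ i 0 = g i.castSucc) ∧ (∀ i, γ i 1 = g i.succ) ∧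
        ∀ i, ∀ s u : ℝ, dist (γ i s) (γ i u) = |s - u| * dist (g i.castSucc) (g i.succ) := by
    choose γ hγ0 hγ1 hγd using fun i : Fin n => hgeo (g i.castSucc) (g i.succ)
    exact ⟨γ, hγ0, hγ1, hγd⟩
  set a : Fin n → ℝ := fun i => t i.castSucc with ha
  set b : Fin n → ℝ := fun i => t i.succ with hb
  have hab : ∀ i, a i < b i := fun i => hmono (Fin.castSucc_lt_succ (i := i))
  set L : Fin n → ℝ := fun i => dist (g i.castSucc) (g i.succ) with hL
  set c : Fin n → ℝ := fun i => L i / (b i - a i) with hc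
  have hc0 : ∀ i, 0 ≤ c i := fun i => div_nonneg dist_nonneg (sub_pos.mpr (hab i)).le
  set v : ℝ → ℝ := fun x => ∑ i : Fin n, Set.indicator (Ioc (a i) (b i)) (fun _ => c i) x
    with hv
  set F : ℝ → M := fun x =>
    if h : ∃ i : Fin n, x ∈ Ioc (a i) (b i) then
      γ h.choose ((x - a h.choose) / (b h.choose - a h.choose))
    else if x ≤ t 0 then g 0 else g (Fin.last n) with hF
  -- uniqueness of the containing interval
  have huniq : ∀ (i j : Fin n) (x : ℝ), x ∈ Ioc (a i) (b i) → x ∈ Ioc (a j) (b j) → i = j := by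
    intro i j x hi hj
    by_contra hij
    rcases (Ne.lt_or_gt hij) with h | h
    · have hba : b i ≤ a j := hmono.monotone (Fin.succ_le_castSucc_iff.mpr h)
      exact absurd (hj.1.trans_le hi.2) (not_lt.mpr hba)
    · have hba : b j ≤ a i := hmono.monotone (Fin.succ_le_castSucc_iff.mpr h)
      exact absurd (hi.1.trans_le hj.2) (not_lt.mpr hba)
  have hF_mem : ∀ (i : Fin n) (x : ℝ), x ∈ Ioc (a i) (b i) →
      F x = γ i ((x - a i) / (b i - a i)) := by
    intro i x hx
    have hex : ∃ j : Fin n, x ∈ Ioc (a j) (b j) := ⟨i, hx⟩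
    have : hex.choose = i := huniq _ _ _ hex.choose_spec hx
    simp only [hF, dif_pos hex, this]
  have hnode : ∀ j : Fin (n + 1), F (t j) = g j := by
    intro j
    induction j using Fin.cases with
    | zero =>
      have hnot : ¬ ∃ i : Fin n, t 0 ∈ Ioc (a i) (b i) := by
        rintro ⟨i, hi⟩
        exact absurd hi.1 (not_lt.mpr (hmono.monotone (Fin.zero_le _)))
      simp only [hF, dif_neg hnot, if_pos (le_refl (t 0))]
    | succ i =>
      have hmem : t i.succ ∈ Ioc (a i) (b i) := ⟨hab i, le_refl _⟩
      rw [hF_mem i _ hmem]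
      have : (t i.succ - a i) / (b i - a i) = 1 :=
        div_self (sub_ne_zero.mpr (hab i).ne')
      rw [show t i.succ - a i = b i - a i from rfl] at this ⊢
      rw [this, hγ1]
  have hF_seg : ∀ (i : Fin n) (x : ℝ), a i ≤ x → x ≤ b i →
      F x = γ i ((x - a i) / (b i - a i)) := by
    intro i x hax hxb
    rcases eq_or_lt_of_le hax with h | h
    · rw [← h]
      simp only [sub_self, zero_div, hγ0]
      exact hnode i.castSucc
    · exact hF_mem i x ⟨h, hxb⟩
  have hF_left : ∀ x : ℝ, x ≤ t 0 → F x = g 0 := by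
    intro x hx
    have hnot : ¬ ∃ i : Fin n, x ∈ Ioc (a i) (b i) := by
      rintro ⟨i, hi⟩
      have h0a : t 0 ≤ a i := hmono.monotone (Fin.zero_le i.castSucc)
      exact absurd ((h0a.trans_lt hi.1).trans_le le_rfl) (not_lt.mpr hx)
    simp only [hF, dif_neg hnot, if_pos hx]
  have hF_right : ∀ x : ℝ, t (Fin.last n) ≤ x → F x = g (Fin.last n) := by
    intro x hx
    rcases eq_or_lt_of_le hx with h | h
    · rw [← h]; exact hnode _
    · have hnot : ¬ ∃ i : Fin n, x ∈ Ioc (a i) (b i) := by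
        rintro ⟨i, hi⟩
        exact absurd (hi.2.trans (hmono.monotone (Fin.le_last i.succ))) (not_le.mpr h)
      have hnot2 : ¬ x ≤ t 0 :=
        not_le.mpr ((hmono.monotone (Fin.zero_le _)).trans_lt h)
      simp only [hF, dif_neg hnot, if_neg hnot2]
  -- basic facts about v
  have hv0 : ∀ x, 0 ≤ v x := fun x =>
    Finset.sum_nonneg fun i _ => Set.indicator_nonneg (fun _ _ => hc0 i) x
  have hind_int : ∀ (d : ℝ) (i : Fin n) (s : Set ℝ),
      IntegrableOn (fun x => Set.indicator (Ioc (a i) (b i)) (fun _ => d) x) s := by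
    intro d i s
    have : Integrable (fun x => Set.indicator (Ioc (a i) (b i)) (fun _ => d) x) volume :=
      (integrable_indicator_iff measurableSet_Ioc).mpr
        (integrableOn_const measure_Ioc_lt_top.ne)
    exact this.integrableOn
  have hv_int : ∀ s : Set ℝ, IntegrableOn v s := fun s =>
    integrable_finset_sum _ fun i _ => hind_int (c i) i s
  have hv_sq : ∀ x, v x ^ 2 =
      ∑ i : Fin n, Set.indicator (Ioc (a i) (b i)) (fun _ => c i ^ 2) x := by
    intro x
    by_cases h : ∃ i : Fin n, x ∈ Ioc (a i) (b i)
    · obtain ⟨i, hi⟩ := h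
      have h1 : v x = c i := by
        show ∑ j : Fin n, Set.indicator (Ioc (a j) (b j)) (fun _ => c j) x = c i
        rw [Finset.sum_eq_single i]
        · exact Set.indicator_of_mem hi _
        · intro j _ hji
          exact Set.indicator_of_notMem (fun hxj => hji (huniq j i x hxj hi)) _
        · intro h; exact absurd (Finset.mem_univ i) h
      have h2 : ∑ j : Fin n, Set.indicator (Ioc (a j) (b j)) (fun _ => c j ^ 2) x
          = c i ^ 2 := by
        rw [Finset.sum_eq_single i]
        · exact Set.indicator_of_mem hi _
        · intro j _ hji
          exact Set.indicator_of_notMem (fun hxj => hji (huniq j i x hxj hi)) _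
        · intro h; exact absurd (Finset.mem_univ i) h
      rw [h1, h2]
    · push_neg at h
      have h1 : v x = 0 := by
        show ∑ j : Fin n, Set.indicator (Ioc (a j) (b j)) (fun _ => c j) x = 0
        exact Finset.sum_eq_zero fun j _ => Set.indicator_of_notMem (h j) _
      have h2 : ∑ j : Fin n, Set.indicator (Ioc (a j) (b j)) (fun _ => c j ^ 2) x = 0 :=
        Finset.sum_eq_zero fun j _ => Set.indicator_of_notMem (h j) _
      rw [h1, h2]; ring
  have hv2_int : IntegrableOn (fun u => (v u) ^ 2) (Ioc (0:ℝ) 1) := by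
    have heq : (fun u => (v u) ^ 2) =
        fun x => ∑ i : Fin n, Set.indicator (Ioc (a i) (b i)) (fun _ => c i ^ 2) x :=
      funext hv_sq
    rw [heq]
    exact integrable_finset_sum _ fun i _ => hind_int (c i ^ 2) i _
  have hsub : ∀ i : Fin n, Ioc (a i) (b i) ⊆ Ioc (0:ℝ) 1 := fun i =>
    Ioc_subset_Ioc (h0.trans (hmono.monotone (Fin.zero_le _)))
      ((hmono.monotone (Fin.le_last _)).trans h1)
  have hcost : (∫ u in Ioc (0:ℝ) 1, (v u) ^ 2) =
      ∑ i : Fin n, L i ^ 2 / (b i - a i) := by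
    simp only [hv_sq]
    rw [integral_finset_sum _ fun i _ => hind_int (c i ^ 2) i _]
    apply Finset.sum_congr rfl
    intro i _
    rw [setIntegral_indicator measurableSet_Ioc,
      Set.inter_eq_self_of_subset_right (hsub i), setIntegral_const,
      Real.volume_real_Ioc_of_le (hab i).le, smul_eq_mul]
    have hΔ : b i - a i ≠ 0 := (sub_pos.mpr (hab i)).ne'
    rw [hc]
    field_simp
  have hint_nn : ∀ s u : ℝ, 0 ≤ ∫ x in Ioc s u, v x := fun s u =>
    setIntegral_nonneg measurableSet_Ioc fun x _ => hv0 x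
  have hadd : ∀ s m u : ℝ, s ≤ m → m ≤ u →
      (∫ x in Ioc s u, v x) = (∫ x in Ioc s m, v x) + ∫ x in Ioc m u, v x := by
    intro s m u hsm hmu
    rw [← Set.Ioc_union_Ioc_eq_Ioc hsm hmu,
      setIntegral_union (Set.Ioc_disjoint_Ioc_of_le le_rfl) measurableSet_Ioc (hv_int _) (hv_int _)]
  have hloc : ∀ (i : Fin n) (s u : ℝ), a i ≤ s → s ≤ u → u ≤ b i →
      dist (F s) (F u) ≤ ∫ x in Ioc s u, v x := by
    intro i s u has hsu hub
    have hΔ : (0:ℝ) < b i - a i := sub_pos.mpr (hab i)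
    rw [hF_seg i s has (hsu.trans hub), hF_seg i u (has.trans hsu) hub, hγd]
    have habs : |(s - a i) / (b i - a i) - (u - a i) / (b i - a i)| = (u - s) / (b i - a i) := by
      rw [div_sub_div_same, abs_div, abs_of_pos hΔ, abs_sub_comm,
        show u - a i - (s - a i) = u - s by ring,
        abs_of_nonneg (by linarith : (0:ℝ) ≤ u - s)]
    rw [habs]
    have hci : c i = L i / (b i - a i) := rfl
    have key : (u - s) / (b i - a i) * L i = (u - s) * c i := by rw [hci]; ring
    rw [show dist (g i.castSucc) (g i.succ) = L i from rfl, key]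
    have hmono_int : (∫ x in Ioc s u, Set.indicator (Ioc (a i) (b i)) (fun _ => c i) x)
        ≤ ∫ x in Ioc s u, v x := by
      apply setIntegral_mono_on (hind_int (c i) i _) (hv_int _) measurableSet_Ioc
      intro x _
      exact Finset.single_le_sum
        (f := fun j => Set.indicator (Ioc (a j) (b j)) (fun _ => c j) x)
        (fun j _ => Set.indicator_nonneg (fun _ _ => hc0 j) x) (Finset.mem_univ i)
    refine le_trans ?_ hmono_int
    rw [setIntegral_indicator measurableSet_Ioc,
      Set.inter_eq_self_of_subset_left (Ioc_subset_Ioc has hub), setIntegral_const,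
      Real.volume_real_Ioc_of_le hsu, smul_eq_mul]
  have hchain : ∀ k : ℕ, k ≤ n → ∀ s u : ℝ, t 0 ≤ s → s ≤ u → ∀ (hk : k < n + 1),
      u ≤ t ⟨k, hk⟩ → dist (F s) (F u) ≤ ∫ x in Ioc s u, v x := by
    intro k
    induction k with
    | zero =>
      intro _ s u h0s hsu hk hu
      have ht0 : t ⟨0, hk⟩ = t 0 := by congr 1
      rw [ht0] at hu
      rw [hF_left s (hsu.trans hu), hF_left u hu, dist_self]
      exact hint_nn s u
    | succ k ih =>
      intro hkn s u h0s hsu hk1 hu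
      have hkn' : k < n := Nat.lt_of_succ_le hkn
      set i : Fin n := ⟨k, hkn'⟩ with hidef
      have hai : a i = t ⟨k, by omega⟩ := rfl
      have hbi : b i = t ⟨k + 1, hk1⟩ := rfl
      have hub : u ≤ b i := by rw [hbi]; exact hu
      by_cases hum : u ≤ a i
      · exact ih hkn'.le s u h0s hsu (by omega) (hai ▸ hum)
      · push_neg at hum
        by_cases hsm : s ≤ a i
        · have h1 : dist (F s) (F (a i)) ≤ ∫ x in Ioc s (a i), v x :=
            ih hkn'.le s (a i) h0s hsm (by omega) (le_of_eq hai)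
          have h2 : dist (F (a i)) (F u) ≤ ∫ x in Ioc (a i) u, v x :=
            hloc i (a i) u le_rfl hum.le hub
          calc dist (F s) (F u) ≤ dist (F s) (F (a i)) + dist (F (a i)) (F u) :=
                dist_triangle _ _ _
            _ ≤ (∫ x in Ioc s (a i), v x) + ∫ x in Ioc (a i) u, v x := add_le_add h1 h2
            _ = ∫ x in Ioc s u, v x := (hadd s (a i) u hsm hum.le).symm
        · push_neg at hsm
          exact hloc i s u hsm.le hsu hub
  have hlip : ∀ s u : ℝ, 0 ≤ s → s ≤ u → u ≤ 1 →
      dist (F s) (F u) ≤ ∫ x in Ioc s u, v x := by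
    intro s u hs0 hsu hu1
    by_cases hu0 : u ≤ t 0
    · rw [hF_left s (hsu.trans hu0), hF_left u hu0, dist_self]; exact hint_nn s u
    push_neg at hu0
    by_cases hsl : t (Fin.last n) ≤ s
    · rw [hF_right s hsl, hF_right u (hsl.trans hsu), dist_self]; exact hint_nn s u
    push_neg at hsl
    have h1 : t 0 ≤ max s (t 0) := le_max_right _ _
    have h3 : max s (t 0) ≤ min u (t (Fin.last n)) :=
      max_le (le_min hsu hsl.le) (le_min hu0.le (hmono.monotone (Fin.zero_le _)))
    have hFs : F (max s (t 0)) = F s := by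
      rcases le_total s (t 0) with h | h
      · rw [max_eq_right h, hF_left s h, hF_left (t 0) le_rfl]
      · rw [max_eq_left h]
    have hFu : F (min u (t (Fin.last n))) = F u := by
      rcases le_total (t (Fin.last n)) u with h | h
      · rw [min_eq_right h, hF_right u h, hnode]
      · rw [min_eq_left h]
    have hlast : min u (t (Fin.last n)) ≤ t ⟨n, n.lt_succ_self⟩ := min_le_right _ _
    have hmain := hchain n le_rfl (max s (t 0)) (min u (t (Fin.last n))) h1 h3
      n.lt_succ_self hlast
    rw [← hFs, ← hFu]
    refine hmain.trans (setIntegral_mono_set (hv_int _)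
      (Filter.Eventually.of_forall fun x => hv0 x)
      (HasSubset.Subset.eventuallyLE
        (Ioc_subset_Ioc (le_max_left _ _) (min_le_left _ _))))
  refine ⟨F, v, hv0, hlip, hv2_int, hnode, ?_⟩
  rw [hcost]

end


/-- Exact finite-dimensional reduction: the penalized regression problem
`min_F R_n(F) + λ∫|F'|²` over H¹ curves (with speed modeled by upper gradients `v`),
where `R_n` depends only on the nodal values `F(t i)`, has the same optimal value as
the finite-dimensional problem `min_{g ∈ Mⁿ} R_n(g) + λ Σ d(gᵢ,gᵢ₊₁)²/Δᵢ`. -/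
theorem stmt_7 {M : Type*} [MetricSpace M] (n : ℕ)
    (t : Fin (n + 1) → ℝ) (hmono : StrictMono t) (h0 : 0 ≤ t 0) (h1 : t (Fin.last n) ≤ 1)
    (R : (Fin (n + 1) → M) → ℝ) (lam : ℝ) (hlam : 0 ≤ lam)
    (hgeo : ∀ x y : M, ∃ γ : ℝ → M, γ 0 = x ∧ γ 1 = y ∧
      ∀ s u : ℝ, dist (γ s) (γ u) = |s - u| * dist x y) :
    sInf {c : ℝ | ∃ (F : ℝ → M) (v : ℝ → ℝ), (∀ u, 0 ≤ v u) ∧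
        (∀ s u : ℝ, 0 ≤ s → s ≤ u → u ≤ 1 → dist (F s) (F u) ≤ ∫ x in Ioc s u, v x) ∧
        IntegrableOn (fun u => (v u) ^ 2) (Ioc 0 1) ∧
        c = R (fun i => F (t i)) + lam * ∫ u in Ioc (0:ℝ) 1, (v u) ^ 2} =
    sInf {c : ℝ | ∃ g : Fin (n + 1) → M,
        c = R g + lam * ∑ i : Fin n,
          dist (g i.castSucc) (g i.succ) ^ 2 / (t i.succ - t i.castSucc)} := by
  classical
  set A := {c : ℝ | ∃ (F : ℝ → M) (v : ℝ → ℝ), (∀ u, 0 ≤ v u) ∧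
        (∀ s u : ℝ, 0 ≤ s → s ≤ u → u ≤ 1 → dist (F s) (F u) ≤ ∫ x in Ioc s u, v x) ∧
        IntegrableOn (fun u => (v u) ^ 2) (Ioc 0 1) ∧
        c = R (fun i => F (t i)) + lam * ∫ u in Ioc (0:ℝ) 1, (v u) ^ 2} with hAdef
  set B := {c : ℝ | ∃ g : Fin (n + 1) → M,
        c = R g + lam * ∑ i : Fin n,
          dist (g i.castSucc) (g i.succ) ^ 2 / (t i.succ - t i.castSucc)} with hBdef
  by_cases hM : Nonempty M
  · have hBA : B ⊆ A := by
      rintro c ⟨g, rfl⟩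
      obtain ⟨F, v, hv0, hlip, hint, hnode, hcost⟩ := myConstruct t g hmono h0 h1 hgeo
      refine ⟨F, v, hv0, hlip, hint, ?_⟩
      rw [hcost]
      congr 1
      congr 1
      exact funext fun j => (hnode j).symm
    have hAB : ∀ x ∈ A, ∃ y ∈ B, y ≤ x := by
      rintro x ⟨F, v, hv0, hlip, hint, rfl⟩
      refine ⟨R (fun i => F (t i)) + lam * ∑ i : Fin n,
          dist (F (t i.castSucc)) (F (t i.succ)) ^ 2 / (t i.succ - t i.castSucc),
        ⟨fun i => F (t i), rfl⟩, ?_⟩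
      have hkey := myForward n t hmono h0 h1 F v hv0 hlip hint
      exact (add_le_add_iff_left _).mpr (mul_le_mul_of_nonneg_left hkey hlam)
    have hBne : B.Nonempty := ⟨_, ⟨fun _ => Classical.arbitrary M, rfl⟩⟩
    have hAne : A.Nonempty := by
      obtain ⟨x, hx⟩ := hBne
      exact ⟨x, hBA hx⟩
    by_cases hbdd : BddBelow B
    · have hbddA : BddBelow A := by
        obtain ⟨lb, hlb⟩ := hbdd
        refine ⟨lb, fun x hx => ?_⟩
        obtain ⟨y, hy, hyx⟩ := hAB x hx
        exact (hlb hy).trans hyx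
      apply le_antisymm
      · exact csInf_le_csInf hbddA hBne hBA
      · apply le_csInf hAne
        intro x hx
        obtain ⟨y, hy, hyx⟩ := hAB x hx
        exact (csInf_le hbdd hy).trans hyx
    · have hbddA : ¬ BddBelow A := fun h => hbdd (h.mono hBA)
      rw [Real.sInf_of_not_bddBelow hbddA, Real.sInf_of_not_bddBelow hbdd]
  · have hA : A = ∅ := eq_empty_of_forall_notMem (by
      rintro c ⟨F, -⟩
      exact hM ⟨F 0⟩)
    have hB : B = ∅ := eq_empty_of_forall_notMem (by
      rintro c ⟨g, -⟩
      exact hM ⟨g 0⟩)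
    rw [hA, hB]
end
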